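/- arXiv:1909.08123 — 2 statements merged into one kernel-verified Lean document; each statement's English description precedes it below -/
import Mathlib

section
/- A pairwise anticommuting subset G ⊆ (𝔽₂)^{2n} is maximal (no element of V anticommutes with every element of G) if and only if the sum of all elements of G is 0. -/
/-- The phase space `(𝔽₂)^{2n}`, modeled as pairs of vectors in `𝔽₂ⁿ`. -/
abbrev V (n : ℕ) := (Fin n → ZMod 2) × (Fin n → ZMod 2)

/-- The standard symplectic bilinear form `ω((a,b),(c,d)) = a·d + b·c`. -/
def sympl {n : ℕ} (P Q : V n) : ZMod 2 :=
  ∑ i, (P.1 i * Q.2 i + P.2 i * Q.1 i)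

/-- A finite set is (pairwise) anticommuting if `ω(P,Q) = 1` for all distinct `P, Q`. -/
def AC {n : ℕ} (G : Finset (V n)) : Prop :=
  ∀ P ∈ G, ∀ Q ∈ G, P ≠ Q → sympl P Q = 1

/-- A maximal pairwise anticommuting set: no strictly larger set is anticommuting. -/
def MaxAC {n : ℕ} (G : Finset (V n)) : Prop :=
  AC G ∧ ∀ H : Finset (V n), G ⊆ H → AC H → H = G

lemma sympl_self {n : ℕ} (P : V n) : sympl P P = 0 := by
  unfold sympl
  rw [Finset.sum_eq_zero]
  intro i _
  rw [mul_comm]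
  exact CharTwo.add_self_eq_zero _

lemma sympl_comm {n : ℕ} (P Q : V n) : sympl P Q = sympl Q P := by
  unfold sympl
  apply Finset.sum_congr rfl
  intro i _
  ring

lemma sympl_add_left {n : ℕ} (A B Q : V n) :
    sympl (A + B) Q = sympl A Q + sympl B Q := by
  unfold sympl
  rw [← Finset.sum_add_distrib]
  apply Finset.sum_congr rfl
  intro i _
  simp [Prod.fst_add, Prod.snd_add]
  ring

lemma sympl_sum_left {n : ℕ} (s : Finset (V n)) (Q : V n) :
    sympl (∑ x ∈ s, x) Q = ∑ x ∈ s, sympl x Q := by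
  induction s using Finset.cons_induction with
  | empty => simp [sympl]
  | cons a s ha ih => rw [Finset.sum_cons, Finset.sum_cons, sympl_add_left, ih]

lemma two_eq_zero' : (1 + 1 : ZMod 2) = 0 := rfl

/-- sum over a subset of an AC set, paired against a member of G. -/
lemma sum_sympl_subset {n : ℕ} {G B : Finset (V n)} (hG : AC G) (hB : B ⊆ G)
    {P₀ : V n} (hP₀ : P₀ ∈ G) :
    ∑ P ∈ B, sympl P P₀ = (B.card : ZMod 2) + (if P₀ ∈ B then 1 else 0) := by
  by_cases h : P₀ ∈ B
  · rw [← Finset.add_sum_erase _ _ h, sympl_self, zero_add,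
      Finset.sum_congr rfl (fun P hP => hG P (hB (Finset.mem_of_mem_erase hP)) P₀ hP₀
        (Finset.ne_of_mem_erase hP))]
    rw [Finset.sum_const, nsmul_eq_mul, mul_one]
    have hc : B.card = (B.erase P₀).card + 1 := (Finset.card_erase_add_one h).symm
    rw [if_pos h, hc]
    push_cast
    rw [add_assoc, two_eq_zero', add_zero]
  · rw [Finset.sum_congr rfl (fun P hP => hG P (hB hP) P₀ hP₀ (fun e => h (e ▸ hP)))]
    rw [Finset.sum_const, nsmul_eq_mul, mul_one, if_neg h, add_zero]

lemma zmod2_cases : ∀ x : ZMod 2, x = 0 ∨ x = 1 := by decide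

lemma exists_R {n : ℕ} {S : V n} (hS : S ≠ 0) : ∃ R : V n, sympl R S = 1 := by
  have : (∃ i, S.1 i ≠ 0) ∨ (∃ i, S.2 i ≠ 0) := by
    by_contra hcon
    push_neg at hcon
    apply hS
    ext i
    · exact hcon.1 i
    · exact hcon.2 i
  have hval : ∀ x : ZMod 2, x ≠ 0 → x = 1 := by decide
  rcases this with ⟨i, hi⟩ | ⟨i, hi⟩
  · refine ⟨(0, Pi.single i 1), ?_⟩
    unfold sympl
    simp [Pi.single_apply]
    exact hval _ hi
  · refine ⟨(Pi.single i 1, 0), ?_⟩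
    unfold sympl
    simp [Pi.single_apply]
    exact hval _ hi

theorem stmt_11 {n : ℕ} (G : Finset (V n)) (hG : AC G) (hne : G.Nonempty) :
    (¬ ∃ Q : V n, ∀ P ∈ G, sympl Q P = 1) ↔ ∑ x ∈ G, x = (0 : V n) := by
  constructor
  · intro hmax
    by_contra hS
    set S := ∑ x ∈ G, x with hSdef
    -- G.card must be odd, else Q = S works
    have hcard : (G.card : ZMod 2) = 1 := by
      rcases zmod2_cases (G.card : ZMod 2) with h0 | h1
      · exact absurd ⟨S, fun P₀ hP₀ => by
          rw [hSdef, sympl_sum_left, sum_sympl_subset hG (le_refl G) hP₀,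
            if_pos hP₀, h0, zero_add]⟩ hmax
      · exact h1
    obtain ⟨R, hR⟩ := exists_R hS
    set B := G.filter (fun P => sympl R P = 0) with hBdef
    have hBsub : B ⊆ G := Finset.filter_subset _ _
    have hBcard : (B.card : ZMod 2) = 0 := by
      have hsum : ∑ P ∈ G, sympl R P = 1 := by
        rw [← Finset.sum_congr rfl (fun P _ => sympl_comm P R), ← sympl_sum_left, ← hSdef,
          sympl_comm]
        exact hR
      have h1 : ∑ P ∈ B, sympl R P = 0 :=
        Finset.sum_eq_zero (fun P hP => (Finset.mem_filter.mp hP).2)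
      have h2 : ∑ P ∈ G.filter (fun P => ¬ sympl R P = 0), sympl R P
          = ((G.filter (fun P => ¬ sympl R P = 0)).card : ZMod 2) := by
        rw [Finset.sum_congr rfl (fun P hP => by
          rcases zmod2_cases (sympl R P) with h | h
          · exact absurd h (Finset.mem_filter.mp hP).2
          · exact h), Finset.sum_const, nsmul_eq_mul, mul_one]
      rw [← Finset.sum_filter_add_sum_filter_not G (fun P => sympl R P = 0), h1, h2,
        zero_add] at hsum
      have hsplit : B.card + (G.filter (fun P => ¬ sympl R P = 0)).card = G.card :=
        Finset.card_filter_add_card_filter_not _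
      have := congrArg (fun m : ℕ => (m : ZMod 2)) hsplit
      push_cast at this
      rw [hsum, hcard] at this
      have := congrArg (· + 1) this
      simpa [add_assoc, two_eq_zero'] using this
    apply hmax
    refine ⟨R + ∑ P ∈ B, P, fun P₀ hP₀ => ?_⟩
    rw [sympl_add_left, sympl_sum_left, sum_sympl_subset hG hBsub hP₀, hBcard, zero_add]
    by_cases h : P₀ ∈ B
    · rw [if_pos h, (Finset.mem_filter.mp h).2, zero_add]
    · rw [if_neg h]
      have : sympl R P₀ = 1 := by
        rcases zmod2_cases (sympl R P₀) with h0 | h1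
        · exact absurd (Finset.mem_filter.mpr ⟨hP₀, h0⟩) h
        · exact h1
      rw [this, add_zero]
  · intro hsum ⟨Q, hQ⟩
    obtain ⟨P₀, hP₀⟩ := hne
    have h1 : (G.card : ZMod 2) = 0 := by
      have : sympl (∑ x ∈ G, x) Q = 0 := by rw [hsum]; simp [sympl]
      rw [sympl_sum_left,
        Finset.sum_congr rfl (fun P hP => (sympl_comm P Q).trans (hQ P hP)),
        Finset.sum_const, nsmul_eq_mul, mul_one] at this
      exact this
    have h2 : (G.card : ZMod 2) = 1 := by
      have : sympl (∑ x ∈ G, x) P₀ = 0 := by rw [hsum]; simp [sympl]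
      rw [sympl_sum_left, sum_sympl_subset hG (le_refl G) hP₀, if_pos hP₀] at this
      have := congrArg (· + 1) this
      simp only [add_assoc, two_eq_zero', add_zero, zero_add] at this
      exact this
    rw [h1] at h2
    exact one_ne_zero h2.symm
end

section
/- For every odd integer ℓ with 1 ≤ ℓ ≤ 2n+1, there exists a maximal pairwise anticommuting subset of (𝔽₂)^{2n} of cardinality ℓ. -/
/- ## Auxiliary material -/

def Avec (n j : ℕ) : V n :=
  (fun i => if (i : ℕ) < j then 1 else 0, fun i => if (i : ℕ) = j then 1 else 0)

def Bvec (n j : ℕ) : V n :=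
  (fun i => if (i : ℕ) ≤ j then 1 else 0, fun i => if (i : ℕ) = j then 1 else 0)

def Cvec (n k : ℕ) : V n :=
  (fun i => if (i : ℕ) < k then 1 else 0, 0)

lemma sum_mul_delta {n : ℕ} (f : Fin n → ZMod 2) (m : ℕ) (hm : m < n) :
    ∑ i, f i * (if (i : ℕ) = m then 1 else 0) = f ⟨m, hm⟩ := by
  rw [Finset.sum_eq_single (⟨m, hm⟩ : Fin n)]
  · simp
  · intro b _ hb
    have : (b : ℕ) ≠ m := fun h => hb (Fin.ext h)
    simp [this]
  · simp

lemma sum_delta_mul {n : ℕ} (f : Fin n → ZMod 2) (m : ℕ) (hm : m < n) :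
    ∑ i : Fin n, (if (i : ℕ) = m then 1 else 0) * f i = f ⟨m, hm⟩ := by
  simp_rw [mul_comm]
  exact sum_mul_delta f m hm

lemma sympl_split {n : ℕ} (P Q : V n) :
    sympl P Q = (∑ i, P.1 i * Q.2 i) + ∑ i, P.2 i * Q.1 i := by
  unfold sympl
  rw [Finset.sum_add_distrib]

lemma sympl_AA {n : ℕ} {j m : ℕ} (hj : j < n) (hm : m < n) (hne : j ≠ m) :
    sympl (Avec n j) (Avec n m) = 1 := by
  rw [sympl_split]
  simp only [Avec, Bvec]
  rw [sum_mul_delta _ m hm, sum_delta_mul _ j hj]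
  rcases lt_or_gt_of_ne hne with h | h
  · simp [h, Nat.lt_asymm h]
  · simp [h, Nat.lt_asymm h]

lemma sympl_AB {n : ℕ} {j m : ℕ} (hj : j < n) (hm : m < n) :
    sympl (Avec n j) (Bvec n m) = 1 := by
  rw [sympl_split]
  simp only [Avec, Bvec]
  rw [sum_mul_delta _ m hm, sum_delta_mul _ j hj]
  rcases lt_trichotomy j m with h | h | h
  · simp [h.le, Nat.lt_asymm h]
  · subst h; simp
  · have h1 : m < j := h
    have h2 : ¬ j ≤ m := not_le.mpr h
    simp [h1, h2]

lemma sympl_BB {n : ℕ} {j m : ℕ} (hj : j < n) (hm : m < n) (hne : j ≠ m) :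
    sympl (Bvec n j) (Bvec n m) = 1 := by
  rw [sympl_split]
  simp only [Avec, Bvec]
  rw [sum_mul_delta _ m hm, sum_delta_mul _ j hj]
  rcases lt_or_gt_of_ne hne with h | h
  · have : ¬ m ≤ j := not_le.mpr h
    simp [h.le, this]
  · have : ¬ j ≤ m := not_le.mpr h
    simp [h.le, this]

lemma sympl_AC {n k : ℕ} {j : ℕ} (hj : j < n) (hjk : j < k) :
    sympl (Avec n j) (Cvec n k) = 1 := by
  rw [sympl_split]
  have h1 : (∑ i, (Avec n j).1 i * (Cvec n k).2 i) = 0 := by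
    simp [Avec, Cvec]
  rw [h1, zero_add]
  simp only [Avec, Bvec, Cvec]
  rw [sum_delta_mul _ j hj]
  simp [hjk]

lemma sympl_BC {n k : ℕ} {j : ℕ} (hj : j < n) (hjk : j < k) :
    sympl (Bvec n j) (Cvec n k) = 1 := by
  rw [sympl_split]
  have h1 : (∑ i, (Bvec n j).1 i * (Cvec n k).2 i) = 0 := by
    simp [Bvec, Cvec]
  rw [h1, zero_add]
  simp only [Avec, Bvec, Cvec]
  rw [sum_delta_mul _ j hj]
  simp [hjk]

/- distinctness -/

lemma A_ne_B {n : ℕ} {j m : ℕ} (hj : j < n) (hm : m < n) : Avec n j ≠ Bvec n m := by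
  intro h
  by_cases hjm : j = m
  · subst hjm
    have := congrArg (fun P : V n => P.1 ⟨j, hj⟩) h
    simp [Avec, Bvec] at this
  · have := congrArg (fun P : V n => P.2 ⟨j, hj⟩) h
    simp [Avec, Bvec, hjm] at this

lemma A_ne_C {n k : ℕ} {j : ℕ} (hj : j < n) : Avec n j ≠ Cvec n k := by
  intro h
  have := congrArg (fun P : V n => P.2 ⟨j, hj⟩) h
  simp [Avec, Cvec] at this

lemma B_ne_C {n k : ℕ} {j : ℕ} (hj : j < n) : Bvec n j ≠ Cvec n k := by
  intro h
  have := congrArg (fun P : V n => P.2 ⟨j, hj⟩) h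
  simp [Bvec, Cvec] at this

lemma A_inj {n : ℕ} {j m : ℕ} (hj : j < n) (hm : m < n) (h : Avec n j = Avec n m) :
    j = m := by
  by_contra hne
  have := congrArg (fun P : V n => P.2 ⟨j, hj⟩) h
  simp [Avec, hne] at this

lemma B_inj {n : ℕ} {j m : ℕ} (hj : j < n) (hm : m < n) (h : Bvec n j = Bvec n m) :
    j = m := by
  by_contra hne
  have := congrArg (fun P : V n => P.2 ⟨j, hj⟩) h
  simp [Bvec, hne] at this

/- linearity of sympl -/

lemma sympl_add_right {n : ℕ} (Q P R : V n) :
    sympl Q (P + R) = sympl Q P + sympl Q R := by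
  unfold sympl
  rw [← Finset.sum_add_distrib]
  apply Finset.sum_congr rfl
  intro i _
  simp only [Prod.fst_add, Prod.snd_add, Pi.add_apply]
  ring

lemma sympl_zero_right {n : ℕ} (Q : V n) : sympl Q 0 = 0 := by
  unfold sympl
  simp

lemma sympl_sum {n : ℕ} (Q : V n) (s : Finset (V n)) :
    sympl Q (∑ P ∈ s, P) = ∑ P ∈ s, sympl Q P := by
  induction s using Finset.cons_induction with
  | empty => simpa using sympl_zero_right Q
  | cons a s ha ih => rw [Finset.sum_cons, Finset.sum_cons, sympl_add_right, ih]

/-- Key maximality criterion: an anticommuting set of odd cardinality whose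
elements sum to zero is maximal. -/
lemma maxAC_of_sum_zero {n : ℕ} (G : Finset (V n)) (hAC : AC G)
    (hodd : Odd G.card) (hsum : ∑ P ∈ G, P = 0) : MaxAC G := by
  refine ⟨hAC, ?_⟩
  intro H hGH hH
  by_contra hne
  obtain ⟨Q, hQH, hQG⟩ : ∃ Q ∈ H, Q ∉ G := by
    by_contra hc
    push_neg at hc
    exact hne (Finset.Subset.antisymm hc hGH)
  have h1 : ∀ P ∈ G, sympl Q P = 1 := by
    intro P hP
    exact hH Q hQH P (hGH hP) (fun h => hQG (h ▸ hP))
  have h2 : ∑ P ∈ G, sympl Q P = (G.card : ZMod 2) := by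
    rw [Finset.sum_congr rfl h1, Finset.sum_const, nsmul_eq_mul, mul_one]
  have h3 : (G.card : ZMod 2) = 1 := by
    obtain ⟨m, hm⟩ := hodd
    rw [hm]
    push_cast
    rw [show ((2 : ZMod 2)) = 0 by decide]
    ring
  have h4 : ∑ P ∈ G, sympl Q P = 0 := by
    rw [← sympl_sum, hsum, sympl_zero_right]
  rw [h2, h3] at h4
  exact one_ne_zero h4

/-- The standard ladder construction of size `2k+1`. -/
def ladder (n k : ℕ) : Finset (V n) :=
  ((Finset.range k).image (Avec n) ∪ (Finset.range k).image (Bvec n)) ∪ {Cvec n k}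

lemma mem_ladder {n k : ℕ} {P : V n} :
    P ∈ ladder n k ↔ (∃ j < k, P = Avec n j) ∨ (∃ j < k, P = Bvec n j) ∨ P = Cvec n k := by
  simp only [ladder, Finset.mem_union, Finset.mem_image, Finset.mem_range,
    Finset.mem_singleton]
  constructor
  · rintro ((⟨j, hj, rfl⟩ | ⟨j, hj, rfl⟩) | rfl)
    · exact Or.inl ⟨j, hj, rfl⟩
    · exact Or.inr (Or.inl ⟨j, hj, rfl⟩)
    · exact Or.inr (Or.inr rfl)
  · rintro (⟨j, hj, rfl⟩ | ⟨j, hj, rfl⟩ | rfl)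
    · exact Or.inl (Or.inl ⟨j, hj, rfl⟩)
    · exact Or.inl (Or.inr ⟨j, hj, rfl⟩)
    · exact Or.inr rfl

lemma ladder_AC {n k : ℕ} (hkn : k ≤ n) : AC (ladder n k) := by
  intro P hP Q hQ hne
  rw [mem_ladder] at hP hQ
  rcases hP with ⟨j, hj, rfl⟩ | ⟨j, hj, rfl⟩ | rfl <;>
    rcases hQ with ⟨m, hm, rfl⟩ | ⟨m, hm, rfl⟩ | rfl
  · exact sympl_AA (lt_of_lt_of_le hj hkn) (lt_of_lt_of_le hm hkn)
      (fun h => hne (h ▸ rfl))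
  · exact sympl_AB (lt_of_lt_of_le hj hkn) (lt_of_lt_of_le hm hkn)
  · exact sympl_AC (lt_of_lt_of_le hj hkn) hj
  · rw [sympl_comm]
    exact sympl_AB (lt_of_lt_of_le hm hkn) (lt_of_lt_of_le hj hkn)
  · exact sympl_BB (lt_of_lt_of_le hj hkn) (lt_of_lt_of_le hm hkn)
      (fun h => hne (h ▸ rfl))
  · exact sympl_BC (lt_of_lt_of_le hj hkn) hj
  · rw [sympl_comm]
    exact sympl_AC (lt_of_lt_of_le hm hkn) hm
  · rw [sympl_comm]
    exact sympl_BC (lt_of_lt_of_le hm hkn) hm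
  · exact absurd rfl hne

lemma ladder_disj1 {n k : ℕ} (hkn : k ≤ n) :
    Disjoint ((Finset.range k).image (Avec n)) ((Finset.range k).image (Bvec n)) := by
  rw [Finset.disjoint_left]
  rintro P hP hP'
  rw [Finset.mem_image] at hP hP'
  obtain ⟨j, hj, rfl⟩ := hP
  obtain ⟨m, hm, hEq⟩ := hP'
  rw [Finset.mem_range] at hj hm
  exact A_ne_B (lt_of_lt_of_le hj hkn) (lt_of_lt_of_le hm hkn) hEq.symm

lemma ladder_disj2 {n k : ℕ} (hkn : k ≤ n) :
    Disjoint ((Finset.range k).image (Avec n) ∪ (Finset.range k).image (Bvec n))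
      ({Cvec n k} : Finset (V n)) := by
  rw [Finset.disjoint_right]
  rintro P hP hP'
  rw [Finset.mem_singleton] at hP
  subst hP
  rw [Finset.mem_union, Finset.mem_image, Finset.mem_image] at hP'
  rcases hP' with ⟨j, hj, hEq⟩ | ⟨j, hj, hEq⟩
  · rw [Finset.mem_range] at hj
    exact A_ne_C (lt_of_lt_of_le hj hkn) hEq
  · rw [Finset.mem_range] at hj
    exact B_ne_C (lt_of_lt_of_le hj hkn) hEq

lemma ladder_card {n k : ℕ} (hkn : k ≤ n) : (ladder n k).card = 2 * k + 1 := by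
  unfold ladder
  rw [Finset.card_union_of_disjoint (ladder_disj2 hkn),
    Finset.card_union_of_disjoint (ladder_disj1 hkn),
    Finset.card_image_of_injOn, Finset.card_image_of_injOn,
    Finset.card_singleton, Finset.card_range]
  · ring
  · intro j hj m hm h
    rw [Finset.mem_coe, Finset.mem_range] at hj hm
    exact B_inj (lt_of_lt_of_le hj hkn) (lt_of_lt_of_le hm hkn) h
  · intro j hj m hm h
    rw [Finset.mem_coe, Finset.mem_range] at hj hm
    exact A_inj (lt_of_lt_of_le hj hkn) (lt_of_lt_of_le hm hkn) h

lemma ladder_sum {n k : ℕ} (hkn : k ≤ n) : ∑ P ∈ ladder n k, P = 0 := by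
  unfold ladder
  rw [Finset.sum_union (ladder_disj2 hkn), Finset.sum_union (ladder_disj1 hkn),
    Finset.sum_singleton,
    Finset.sum_image (fun j hj m hm h => A_inj
      (lt_of_lt_of_le (Finset.mem_range.mp hj) hkn)
      (lt_of_lt_of_le (Finset.mem_range.mp hm) hkn) h),
    Finset.sum_image (fun j hj m hm h => B_inj
      (lt_of_lt_of_le (Finset.mem_range.mp hj) hkn)
      (lt_of_lt_of_le (Finset.mem_range.mp hm) hkn) h)]
  apply Prod.ext
  · simp only [Prod.fst_add, Prod.fst_sum, Prod.fst_zero]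
    funext i
    simp only [Pi.add_apply, Finset.sum_apply, Pi.zero_apply, Avec, Bvec, Cvec]
    have key : ∀ j ∈ Finset.range k,
        ((if (i:ℕ) < j then (1:ZMod 2) else 0) + (if (i:ℕ) ≤ j then 1 else 0)) =
        (if (i:ℕ) = j then 1 else 0) := by
      intro j _
      rcases lt_trichotomy (i : ℕ) j with h | h | h
      · simp only [if_pos h, if_pos h.le, if_neg (Nat.ne_of_lt h)]
        decide
      · simp [h]
      · have h1 : ¬ (i:ℕ) < j := Nat.lt_asymm h
        have h2 : ¬ (i:ℕ) ≤ j := not_le.mpr h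
        have h3 : (i:ℕ) ≠ j := Nat.ne_of_gt h
        simp [h1, h2, h3]
    have hAB : (∑ j ∈ Finset.range k, if (i:ℕ) < j then (1:ZMod 2) else 0) +
        (∑ j ∈ Finset.range k, if (i:ℕ) ≤ j then (1:ZMod 2) else 0) =
        (if (i:ℕ) < k then 1 else 0) := by
      rw [← Finset.sum_add_distrib, Finset.sum_congr rfl key,
        Finset.sum_ite_eq (Finset.range k) (i : ℕ) (fun _ => (1 : ZMod 2))]
      simp only [Finset.mem_range]
    have h2 : (2 : ZMod 2) = 0 := by decide
    linear_combination hAB + (if (i:ℕ) < k then (1:ZMod 2) else 0) * h2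
  · simp only [Prod.snd_add, Prod.snd_sum, Prod.snd_zero]
    funext i
    simp only [Pi.add_apply, Finset.sum_apply, Pi.zero_apply, Avec, Bvec, Cvec]
    rw [← Finset.sum_add_distrib]
    have : ∀ j ∈ Finset.range k,
        ((if (i:ℕ) = j then (1:ZMod 2) else 0) + (if (i:ℕ) = j then 1 else 0)) = 0 := by
      intro j _
      split <;> decide
    rw [Finset.sum_congr rfl this]
    simp

theorem stmt_14 {n : ℕ} (ℓ : ℕ) (hodd : Odd ℓ) (h1 : 1 ≤ ℓ) (h2 : ℓ ≤ 2 * n + 1) :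
    ∃ G : Finset (V n), MaxAC G ∧ G.card = ℓ := by
  obtain ⟨k, hk⟩ := hodd
  have hkn : k ≤ n := by omega
  refine ⟨ladder n k, ?_, ?_⟩
  · apply maxAC_of_sum_zero _ (ladder_AC hkn)
    · rw [ladder_card hkn]
      exact ⟨k, rfl⟩
    · exact ladder_sum hkn
  · rw [ladder_card hkn]; omega
end
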